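/- The triangle multigraph T_{2,3,3} (three vertices with pairwise edge multiplicities 2, 3, 3) is strongly Z_5-connected: every Z_5-boundary β (with β(v_1)+β(v_2)+β(v_3) ≡ 0 mod 5) is achieved by some orientation. -/
import Mathlib


/-- The direction of edge `i` under orientation `o`: if `o i = true` the
reference direction is reversed. -/
def edir {V : Type} {m : ℕ} (ends : Fin m → V × V) (o : Fin m → Bool) (i : Fin m) : V × V :=
  if o i then ((ends i).2, (ends i).1) else ends i

/-- Contribution of edge `i` to `d⁺ - d⁻` at vertex `v`, computed in `ZMod n`. -/
def contrib {V : Type} [DecidableEq V] {m : ℕ} (n : ℕ) (ends : Fin m → V × V)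
    (o : Fin m → Bool) (i : Fin m) (v : V) : ZMod n :=
  (if (edir ends o i).1 = v then 1 else 0) - (if (edir ends o i).2 = v then 1 else 0)

/-- `d⁺_D(v) - d⁻_D(v)` in `ZMod n` for the orientation `o` of the multigraph
with edge-endpoint function `ends`. -/
def netDeg {V : Type} [DecidableEq V] {m : ℕ} (n : ℕ) (ends : Fin m → V × V)
    (o : Fin m → Bool) (v : V) : ZMod n :=
  ∑ i : Fin m, contrib n ends o i v

def T233 : Fin 8 → Fin 3 × Fin 3 :=
  ![(1, 2), (1, 2), (0, 2), (0, 2), (0, 2), (0, 1), (0, 1), (0, 1)]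

set_option maxRecDepth 10000 in
theorem T233_strongly_Z5_connected (β : Fin 3 → ZMod 5) (hβ : β 0 + β 1 + β 2 = 0) :
    ∃ o : Fin 8 → Bool, ∀ v : Fin 3, netDeg 5 T233 o v = β v := by
  have key : ∀ a b : ZMod 5, ∃ o : Fin 8 → Bool,
      ∀ v : Fin 3, netDeg 5 T233 o v = ![a, b, -a - b] v := by decide
  have h2 : β 2 = -β 0 - β 1 := by linear_combination hβ
  obtain ⟨o, ho⟩ := key (β 0) (β 1)
  exact ⟨o, fun v => by fin_cases v <;> simp [ho 0, ho 1, ho 2, h2]⟩
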